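/- For every continuous ℤ^d-periodic function u : ℝ^d → ℝ, the map (t,x) ↦ T̃^a_t u(x) is continuous on [0,∞) × ℝ^d. -/

import Mathlib

open Set Filter

noncomputable section

/-- Euclidean space `ℝ^d`. -/
abbrev Ed (d : ℕ) := EuclideanSpace ℝ (Fin d)

/-- The vector in `ℝ^d` with integer coordinates `k`. -/
def intVec (d : ℕ) (k : Fin d → ℤ) : Ed d := WithLp.toLp 2 (fun i => (k i : ℝ))

/-- `u : ℝ^d → ℝ` is `ℤ^d`-periodic. -/
def IsZdPeriodic {d : ℕ} (u : Ed d → ℝ) : Prop :=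
  ∀ (x : Ed d) (k : Fin d → ℤ), u (x + intVec d k) = u x

/-- `γ` is continuous and piecewise `C¹` on `[a, b]`. -/
def PiecewiseC1On {d : ℕ} (γ : ℝ → Ed d) (a b : ℝ) : Prop :=
  ContinuousOn γ (Set.Icc a b) ∧
  ∃ (n : ℕ) (T : Fin (n + 1) → ℝ), T 0 = a ∧ T (Fin.last n) = b ∧ Monotone T ∧
    ∀ i : Fin n, ContDiffOn ℝ 1 γ (Set.Icc (T i.castSucc) (T i.succ))

/-- The standing hypotheses on the autonomous Tonelli Lagrangian `La`:
`C²` smoothness, `ℤ^d`-periodicity in `x`, positive definiteness of the Hessian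
`∂²La/∂v²`, and superlinear growth in `v`. -/
def TonelliAut {d : ℕ} (La : Ed d → Ed d → ℝ) : Prop :=
  ContDiff ℝ 2 (fun p : Ed d × Ed d => La p.1 p.2) ∧
  (∀ (x v : Ed d) (k : Fin d → ℤ), La (x + intVec d k) v = La x v) ∧
  (∀ x v w : Ed d, w ≠ 0 → 0 < iteratedFDeriv ℝ 2 (fun v' => La x v') v ![w, w]) ∧
  (∀ A : ℝ, 0 ≤ A → ∃ B : ℝ, ∀ x v : Ed d, A * ‖v‖ - B ≤ La x v)

/-- The action of the curve `γ : [a,b] → ℝ^d` for the autonomous Lagrangian `La`. -/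
def actionA {d : ℕ} (La : Ed d → Ed d → ℝ) (γ : ℝ → Ed d) (a b : ℝ) : ℝ :=
  ∫ s in a..b, La (γ s) (deriv γ s)

/-- The Lax–Oleinik semigroup `Tᵃ_t u (x)`: `Tᵃ_0 u = u` and, for `t > 0`, the infimum of
`u(γ(0)) + ∫₀^t La(γ,γ') ds` over continuous piecewise `C¹` curves ending at `x`. -/
def LOa {d : ℕ} (La : Ed d → Ed d → ℝ) (u : Ed d → ℝ) (t : ℝ) (x : Ed d) : ℝ :=
  if t = 0 then u x
  else sInf {r | ∃ γ : ℝ → Ed d, PiecewiseC1On γ 0 t ∧ γ t = x ∧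
    r = u (γ 0) + actionA La γ 0 t}

/-- The new Lax–Oleinik operator `T̃ᵃ_t u (x) = inf_{σ ∈ [t,2t]} Tᵃ_σ u (x)`. -/
def LOnew {d : ℕ} (La : Ed d → Ed d → ℝ) (u : Ed d → ℝ) (t : ℝ) (x : Ed d) : ℝ :=
  sInf {r | ∃ σ : ℝ, t ≤ σ ∧ σ ≤ 2 * t ∧ r = LOa La u σ x}

variable {d : ℕ}

lemma isCompact_cube (a b : ℝ) : IsCompact {y : Ed d | ∀ i, y i ∈ Icc a b} := by
  have := (EuclideanSpace.equiv (Fin d) ℝ).toHomeomorph.isCompact_preimage.mpr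
    (isCompact_univ_pi (fun _ : Fin d => isCompact_Icc (a := a) (b := b)))
  convert this using 1
  ext y
  show (∀ i, y i ∈ Icc a b) ↔ _ ∈ univ.pi _
  rw [Set.mem_pi]
  exact ⟨fun h i _ => h i, fun h i => h i (Set.mem_univ i)⟩

lemma abs_coord_le_norm (z : Ed d) (i : Fin d) : |z i| ≤ ‖z‖ := by
  have h := EuclideanSpace.norm_eq z
  rw [h]
  have : |z i| = Real.sqrt (‖z i‖^2) := by
    rw [Real.sqrt_sq_eq_abs]; simp
  rw [this]
  apply Real.sqrt_le_sqrt
  apply Finset.single_le_sum (f := fun j => ‖z j‖^2) (fun j _ => by positivity) (Finset.mem_univ i)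

lemma sub_coord (z w : Ed d) (i : Fin d) : (z - w) i = z i - w i := rfl

lemma sub_intVec_coord (x : Ed d) (k : Fin d → ℤ) (i : Fin d) : (x - intVec d k) i = x i - k i := rfl

lemma periodic_sub (u : Ed d → ℝ) (huper : IsZdPeriodic u) (x : Ed d) (k : Fin d → ℤ) :
    u (x - intVec d k) = u x := by
  have := huper (x - intVec d k) k
  simpa using this.symm

/-- reduction to the fundamental cube -/
lemma exists_floor_vec (x : Ed d) : ∃ k : Fin d → ℤ, ∀ i, (x - intVec d k) i ∈ Icc (0:ℝ) 1 := by
  refine ⟨fun i => ⌊x i⌋, fun i => ?_⟩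
  rw [sub_intVec_coord]
  constructor
  · linarith [Int.floor_le (x i)]
  · linarith [Int.lt_floor_add_one (x i)]

lemma periodic_bounded (u : Ed d → ℝ) (hu : Continuous u) (huper : IsZdPeriodic u) :
    ∃ m M : ℝ, ∀ x, m ≤ u x ∧ u x ≤ M := by
  obtain ⟨C, hC⟩ := (isCompact_cube (d := d) 0 1).exists_bound_of_continuousOn hu.continuousOn
  refine ⟨-C, C, fun x => ?_⟩
  obtain ⟨k, hk⟩ := exists_floor_vec x
  have := hC _ hk
  rw [periodic_sub u huper x k] at this
  rw [Real.norm_eq_abs, abs_le] at this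
  exact this

lemma periodic_unifCont (u : Ed d → ℝ) (hu : Continuous u) (huper : IsZdPeriodic u) :
    ∀ ε > 0, ∃ δ > 0, ∀ x y : Ed d, ‖x - y‖ ≤ δ → |u x - u y| ≤ ε := by
  intro ε hε
  have hK : IsCompact {y : Ed d | ∀ i, y i ∈ Icc (-1:ℝ) 2} := isCompact_cube _ _
  have huc : UniformContinuousOn u {y : Ed d | ∀ i, y i ∈ Icc (-1:ℝ) 2} :=
    hK.uniformContinuousOn_of_continuous hu.continuousOn
  rw [Metric.uniformContinuousOn_iff_le] at huc
  obtain ⟨δ, hδ, hδ'⟩ := huc ε hε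
  refine ⟨min δ 1, by positivity, fun x y hxy => ?_⟩
  obtain ⟨k, hk⟩ := exists_floor_vec x
  have hx' : (x - intVec d k) ∈ {y : Ed d | ∀ i, y i ∈ Icc (-1:ℝ) 2} := by
    intro i; have := hk i; constructor <;> [linarith [this.1]; linarith [this.2]]
  have hy' : (y - intVec d k) ∈ {y : Ed d | ∀ i, y i ∈ Icc (-1:ℝ) 2} := by
    intro i
    have h1 := hk i
    have h2 : |(y - x) i| ≤ ‖y - x‖ := abs_coord_le_norm _ i
    have h3 : ‖y - x‖ ≤ 1 := by rw [← neg_sub x y, norm_neg]; exact hxy.trans (min_le_right _ _)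
    have h4 : (y - intVec d k) i = (x - intVec d k) i + (y - x) i := by
      rw [sub_intVec_coord, sub_intVec_coord, sub_coord]; ring
    rw [h4]
    rw [abs_le] at h2
    constructor
    · have := h1.1; nlinarith [h2.1]
    · have := h1.2; nlinarith [h2.2]
  have hdist : dist (x - intVec d k) (y - intVec d k) ≤ δ := by
    rw [dist_eq_norm]
    have : (x - intVec d k) - (y - intVec d k) = x - y := by abel
    rw [this]; exact hxy.trans (min_le_left _ _)
  have := hδ' _ hx' _ hy' hdist
  rw [periodic_sub u huper x k, periodic_sub u huper y k] at this
  rw [Real.dist_eq] at this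
  linarith

variable {La : Ed d → Ed d → ℝ}

lemma TonelliAut.continuous (hLa : TonelliAut La) :
    Continuous (fun p : Ed d × Ed d => La p.1 p.2) := hLa.1.continuous

lemma TonelliAut.upper (hLa : TonelliAut La) (V : ℝ) :
    ∃ C, 0 ≤ C ∧ ∀ x v : Ed d, ‖v‖ ≤ V → La x v ≤ C := by
  have hK : IsCompact (({y : Ed d | ∀ i, y i ∈ Icc (0:ℝ) 1}) ×ˢ (Metric.closedBall (0 : Ed d) V)) :=
    (isCompact_cube 0 1).prod (isCompact_closedBall _ _)
  obtain ⟨C, hC⟩ := hK.exists_bound_of_continuousOn hLa.continuous.continuousOn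
  refine ⟨max C 0, le_max_right _ _, fun x v hv => ?_⟩
  obtain ⟨k, hk⟩ := exists_floor_vec x
  have hper : La (x - intVec d k) v = La x v := by
    have := hLa.2.1 (x - intVec d k) v k
    simpa using this.symm
  have hmem : ((x - intVec d k), v) ∈
      ({y : Ed d | ∀ i, y i ∈ Icc (0:ℝ) 1}) ×ˢ (Metric.closedBall (0 : Ed d) V) := by
    refine ⟨hk, ?_⟩
    simpa [Metric.mem_closedBall, dist_eq_norm] using hv
  have := hC _ hmem
  rw [Real.norm_eq_abs, abs_le] at this
  calc La x v = La (x - intVec d k) v := hper.symm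
    _ ≤ C := this.2
    _ ≤ max C 0 := le_max_left _ _

lemma TonelliAut.lower0 (hLa : TonelliAut La) : ∃ B, 0 ≤ B ∧ ∀ x v : Ed d, -B ≤ La x v := by
  obtain ⟨B, hB⟩ := hLa.2.2.2 0 le_rfl
  refine ⟨max B 0, le_max_right _ _, fun x v => ?_⟩
  have := hB x v
  have h2 : -(max B 0) ≤ -B := by simp [le_max_left]
  nlinarith [this]

lemma TonelliAut.lower1 (hLa : TonelliAut La) : ∃ B, 0 ≤ B ∧ ∀ x v : Ed d, ‖v‖ - B ≤ La x v := by
  obtain ⟨B, hB⟩ := hLa.2.2.2 1 zero_le_one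
  refine ⟨max B 0, le_max_right _ _, fun x v => ?_⟩
  have := hB x v
  have h2 : -(max B 0) ≤ -B := by simp [le_max_left]
  nlinarith [this]

lemma exists_mem_Ioo_piece {n : ℕ} {T : Fin (n+1) → ℝ} (hm : Monotone T) {s : ℝ}
    (hs1 : T 0 ≤ s) (hs2 : s ≤ T (Fin.last n)) (hs : s ∉ Set.range T) :
    ∃ i : Fin n, s ∈ Ioo (T i.castSucc) (T i.succ) := by
  classical
  set J : Finset (Fin (n+1)) := Finset.univ.filter (fun j => T j < s) with hJ
  have h0J : (0 : Fin (n+1)) ∈ J := by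
    simp only [hJ, Finset.mem_filter, Finset.mem_univ, true_and]
    rcases lt_or_eq_of_le hs1 with h | h
    · exact h
    · exact absurd ⟨0, h⟩ hs
  have hJne : J.Nonempty := ⟨0, h0J⟩
  obtain ⟨j, hjmem, hjmax⟩ : ∃ j ∈ J, ∀ k ∈ J, k ≤ j :=
    ⟨J.max' hJne, J.max'_mem hJne, fun k hk => J.le_max' k hk⟩
  have hjlt : T j < s := by
    simpa only [hJ, Finset.mem_filter, Finset.mem_univ, true_and] using hjmem
  have hjne : j ≠ Fin.last n := by
    intro hcontr
    rw [hcontr] at hjlt; exact absurd hs2 (not_le.mpr hjlt)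
  have hjv : j.val < n := by
    have h1 := j.isLt
    have h2 : j.val ≠ n := fun hc => hjne (Fin.ext hc)
    omega
  refine ⟨⟨j.val, hjv⟩, ?_, ?_⟩
  · have hcs : Fin.castSucc ⟨j.val, hjv⟩ = j := by ext; simp
    rw [hcs]; exact hjlt
  · have hsucc : Fin.succ ⟨j.val, hjv⟩ ∉ J := by
      intro hc
      have hle := hjmax _ hc
      rw [Fin.le_def, Fin.val_succ, Fin.val_mk] at hle
      omega
    have : ¬ (T (Fin.succ ⟨j.val, hjv⟩) < s) := by
      intro hc
      exact hsucc (by simp only [hJ, Finset.mem_filter, Finset.mem_univ, true_and]; exact hc)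
    have hge : s ≤ T (Fin.succ ⟨j.val, hjv⟩) := not_lt.mp this
    rcases lt_or_eq_of_le hge with h | h
    · exact h
    · exact absurd ⟨_, h.symm⟩ hs

lemma exists_mem_Icc_piece {n : ℕ} {T : Fin (n+1) → ℝ} (hm : Monotone T) (hn : 0 < n) {s : ℝ}
    (hs1 : T 0 ≤ s) (hs2 : s ≤ T (Fin.last n)) :
    ∃ i : Fin n, s ∈ Icc (T i.castSucc) (T i.succ) := by
  by_cases hs : s ∈ Set.range T
  · obtain ⟨j, hjs⟩ := hs
    rcases Nat.lt_or_ge j.val n with hjv | hjv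
    · refine ⟨⟨j.val, hjv⟩, ?_, ?_⟩
      · have hcs : Fin.castSucc ⟨j.val, hjv⟩ = j := by ext; simp
        rw [hcs, hjs]
      · rw [← hjs]
        exact hm (by rw [Fin.le_def]; simp [Fin.succ_mk])
    · -- j = last
      have hjl : j = Fin.last n := by ext; simp; omega
      refine ⟨⟨n-1, by omega⟩, ?_, ?_⟩
      · calc T (⟨n-1, by omega⟩ : Fin n).castSucc ≤ T j := by
              refine hm ?_
              rw [Fin.le_def]
              simp only [Fin.castSucc_mk]
              omega
          _ = s := hjs
      · have hsucc : Fin.succ (⟨n-1, by omega⟩ : Fin n) = Fin.last n := by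
          ext; simp only [Fin.val_succ, Fin.val_last]; omega
        rw [hsucc, ← hjl, hjs]
  · obtain ⟨i, hi⟩ := exists_mem_Ioo_piece hm hs1 hs2 hs
    exact ⟨i, Ioo_subset_Icc_self hi⟩

namespace PiecewiseC1On

variable {γ : ℝ → Ed d} {a b : ℝ}

lemma endpoint_le (h : PiecewiseC1On γ a b) : a ≤ b := by
  obtain ⟨-, n, T, h0, hl, hm, -⟩ := h
  rw [← h0, ← hl]; exact hm (Fin.zero_le _)

lemma deriv_bound (h : PiecewiseC1On γ a b) :
    ∃ (R : ℝ) (E : Set ℝ), 0 ≤ R ∧ E.Finite ∧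
      ∀ s ∈ Icc a b \ E, ‖deriv γ s‖ ≤ R := by
  obtain ⟨hcont, n, T, h0, hl, hm, hCD⟩ := h
  have hC : ∀ i : Fin n, ∃ C, ∀ s ∈ Ioo (T i.castSucc) (T i.succ), ‖deriv γ s‖ ≤ C := by
    intro i
    rcases lt_or_ge (T i.castSucc) (T i.succ) with hlt | hge
    · have hcd := hCD i
      have hcont' := hcd.continuousOn_derivWithin (uniqueDiffOn_Icc hlt) le_rfl
      obtain ⟨C, hCb⟩ := isCompact_Icc.exists_bound_of_continuousOn hcont'
      refine ⟨C, fun s hs => ?_⟩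
      have hd : derivWithin γ (Icc (T i.castSucc) (T i.succ)) s = deriv γ s :=
        derivWithin_of_mem_nhds (Icc_mem_nhds hs.1 hs.2)
      rw [← hd]
      exact hCb s (Ioo_subset_Icc_self hs)
    · refine ⟨0, fun s hs => absurd (hs.1.trans hs.2) (not_lt.mpr hge)⟩
  choose C hCb using hC
  refine ⟨∑ i, max (C i) 0, Set.range T, Finset.sum_nonneg (fun i _ => le_max_right _ _),
    Set.finite_range T, fun s hs => ?_⟩
  obtain ⟨hsI, hsE⟩ := hs
  obtain ⟨i, hi⟩ := exists_mem_Ioo_piece hm (h0 ▸ hsI.1) (hl ▸ hsI.2) hsE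
  calc ‖deriv γ s‖ ≤ C i := hCb i s hi
    _ ≤ max (C i) 0 := le_max_left _ _
    _ ≤ ∑ i, max (C i) 0 :=
        Finset.single_le_sum (f := fun i => max (C i) 0) (fun i _ => le_max_right _ _)
          (Finset.mem_univ i)

end PiecewiseC1On

open MeasureTheory in
lemma PiecewiseC1On.deriv_intervalIntegrable {γ : ℝ → Ed d} {a b : ℝ}
    (h : PiecewiseC1On γ a b) :
    IntervalIntegrable (deriv γ) volume a b := by
  have hab := h.endpoint_le
  rw [intervalIntegrable_iff_integrableOn_Ioc_of_le hab]
  obtain ⟨R, E, hR0, hEfin, hRE⟩ := h.deriv_bound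
  have hEae : ∀ᵐ s ∂(volume.restrict (Ioc a b)), s ∉ E :=
    ae_restrict_of_ae (measure_eq_zero_iff_ae_notMem.mp (hEfin.measure_zero volume))
  refine Integrable.mono' (g := fun _ => R)
    (integrableOn_const measure_Ioc_lt_top.ne)
    (measurable_deriv γ).aestronglyMeasurable.restrict ?_
  filter_upwards [ae_restrict_mem measurableSet_Ioc, hEae] with s hs hsE
  exact hRE s ⟨Ioc_subset_Icc_self hs, hsE⟩

open MeasureTheory in
lemma PiecewiseC1On.integrand_intervalIntegrable {γ : ℝ → Ed d} {a b : ℝ}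
    (h : PiecewiseC1On γ a b)
    {φ : Ed d → Ed d → ℝ} (hφ : Continuous fun p : Ed d × Ed d => φ p.1 p.2) :
    IntervalIntegrable (fun s => φ (γ s) (deriv γ s)) volume a b := by
  have hab := h.endpoint_le
  rw [intervalIntegrable_iff_integrableOn_Ioc_of_le hab]
  obtain ⟨R, E, hR0, hEfin, hRE⟩ := h.deriv_bound
  have hEae : ∀ᵐ s ∂(volume.restrict (Ioc a b)), s ∉ E :=
    ae_restrict_of_ae (measure_eq_zero_iff_ae_notMem.mp (hEfin.measure_zero volume))
  have hKc : IsCompact ((γ '' Icc a b) ×ˢ Metric.closedBall (0:Ed d) R) :=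
    (isCompact_Icc.image_of_continuousOn h.1).prod (isCompact_closedBall _ _)
  obtain ⟨C, hC⟩ := hKc.exists_bound_of_continuousOn hφ.continuousOn
  have h1 : AEMeasurable γ (volume.restrict (Ioc a b)) :=
    (h.1.mono Ioc_subset_Icc_self).aemeasurable measurableSet_Ioc
  have h2 : AEMeasurable (deriv γ) (volume.restrict (Ioc a b)) :=
    (measurable_deriv γ).aemeasurable
  refine Integrable.mono' (g := fun _ => C)
    (integrableOn_const measure_Ioc_lt_top.ne)
    (hφ.measurable.comp_aemeasurable (h1.prodMk h2)).aestronglyMeasurable ?_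
  filter_upwards [ae_restrict_mem measurableSet_Ioc, hEae] with s hs hsE
  have hmem : (γ s, deriv γ s) ∈ (γ '' Icc a b) ×ˢ Metric.closedBall (0:Ed d) R := by
    refine ⟨⟨s, Ioc_subset_Icc_self hs, rfl⟩, ?_⟩
    simpa [Metric.mem_closedBall, dist_eq_norm] using hRE s ⟨Ioc_subset_Icc_self hs, hsE⟩
  exact hC _ hmem

lemma norm_sub_le_integral_piece {γ : ℝ → Ed d} {p q c e : ℝ}
    (hcd : ContDiffOn ℝ 1 γ (Icc p q)) (hp : p ≤ c) (hce : c ≤ e) (heq : e ≤ q)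
    (hint : IntervalIntegrable (deriv γ) MeasureTheory.volume c e) :
    ‖γ e - γ c‖ ≤ ∫ s in c..e, ‖deriv γ s‖ := by
  have heqsub : ∫ s in c..e, deriv γ s = γ e - γ c := by
    refine intervalIntegral.integral_eq_sub_of_hasDeriv_right_of_le hce
      (hcd.continuousOn.mono (Icc_subset_Icc hp heq)) (fun s hs => ?_) hint
    have hmem : s ∈ Icc p q := ⟨hp.trans hs.1.le, hs.2.le.trans heq⟩
    have hnh : Icc p q ∈ nhds s := Icc_mem_nhds (hp.trans_lt hs.1) (hs.2.trans_le heq)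
    have hdiff : DifferentiableAt ℝ γ s :=
      ((hcd.differentiableOn one_ne_zero) s hmem).differentiableAt hnh
    exact hdiff.hasDerivAt.hasDerivWithinAt
  calc ‖γ e - γ c‖ = ‖∫ s in c..e, deriv γ s‖ := by rw [heqsub]
    _ ≤ ∫ s in c..e, ‖deriv γ s‖ := intervalIntegral.norm_integral_le_integral_norm hce

lemma PiecewiseC1On.norm_sub_le_integral {γ : ℝ → Ed d} {a b : ℝ}
    (h : PiecewiseC1On γ a b) {c e : ℝ}
    (hac : a ≤ c) (hce : c ≤ e) (heb : e ≤ b) :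
    ‖γ e - γ c‖ ≤ ∫ s in c..e, ‖deriv γ s‖ := by
  have hder := h.deriv_intervalIntegrable
  have hsub : ∀ c' e', a ≤ c' → c' ≤ e' → e' ≤ b →
      IntervalIntegrable (deriv γ) MeasureTheory.volume c' e' := by
    intro c' e' h1 h2 h3
    refine hder.mono_set ?_
    rw [uIcc_of_le h2, uIcc_of_le h.endpoint_le]
    exact Icc_subset_Icc h1 h3
  obtain ⟨hcont, n, T, h0, hl, hm, hCD⟩ := h
  have hTb : ∀ j : Fin (n+1), T j ≤ b := fun j => hl ▸ hm (Fin.le_last j)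
  have hTa : ∀ j : Fin (n+1), a ≤ T j := fun j => h0 ▸ hm (Fin.zero_le j)
  have key : ∀ j : ℕ, ∀ hj : j < n+1, ∀ c e : ℝ, a ≤ c → c ≤ e → e ≤ T ⟨j, hj⟩ →
      ‖γ e - γ c‖ ≤ ∫ s in c..e, ‖deriv γ s‖ := by
    intro j
    induction j with
    | zero =>
      intro hj c e hac hce heT
      have h00 : (⟨0, hj⟩ : Fin (n+1)) = 0 := rfl
      rw [h00, h0] at heT
      have hcee : c = e := le_antisymm hce (heT.trans hac)
      subst hcee
      simp
    | succ j ih =>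
      intro hj c e hac hce heT
      have hjn : j < n+1 := Nat.lt_of_succ_lt hj
      have heb' : e ≤ b := heT.trans (hTb _)
      rcases le_or_gt e (T ⟨j, hjn⟩) with hcase | hcase
      · exact ih hjn c e hac hce hcase
      have hjn' : j < n := by
        by_contra hcon
        have hjeq : (⟨j, hjn⟩ : Fin (n+1)) = Fin.last n := by ext; simp; omega
        rw [hjeq, hl] at hcase
        exact absurd heb' (not_le.mpr hcase)
      have hcast : (⟨j, hjn'⟩ : Fin n).castSucc = ⟨j, hjn⟩ := rfl
      have hsucc : (⟨j, hjn'⟩ : Fin n).succ = ⟨j+1, hj⟩ := rfl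
      have hpieceCD := hCD ⟨j, hjn'⟩
      rw [hcast, hsucc] at hpieceCD
      rcases le_or_gt (T ⟨j, hjn⟩) c with hcase2 | hcase2
      · exact norm_sub_le_integral_piece hpieceCD hcase2 hce heT (hsub c e hac hce heb')
      · set m := T ⟨j, hjn⟩ with hmdef
        have h1 := ih hjn c m hac hcase2.le le_rfl
        have h2 := norm_sub_le_integral_piece hpieceCD le_rfl hcase.le heT
          (hsub m e (hTa _) hcase.le heb')
        have hadd := intervalIntegral.integral_add_adjacent_intervals
          (f := fun s => ‖deriv γ s‖) (a := c) (b := m) (c := e)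
          ((hsub c m hac hcase2.le (hTb _)).norm) ((hsub m e (hTa _) hcase.le heb').norm)
        calc ‖γ e - γ c‖ ≤ ‖γ e - γ m‖ + ‖γ m - γ c‖ := norm_sub_le_norm_sub_add_norm_sub _ _ _
          _ ≤ (∫ s in m..e, ‖deriv γ s‖) + ∫ s in c..m, ‖deriv γ s‖ := add_le_add h2 h1
          _ = ∫ s in c..e, ‖deriv γ s‖ := by rw [← hadd]; ring
  have hlast : (⟨n, Nat.lt_succ_self n⟩ : Fin (n+1)) = Fin.last n := rfl
  exact key n (Nat.lt_succ_self n) c e hac hce (by rw [hlast, hl]; exact heb)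

lemma PiecewiseC1On.mono {γ : ℝ → Ed d} {a b : ℝ} (h : PiecewiseC1On γ a b) {a' b' : ℝ}
    (ha : a ≤ a') (hab : a' ≤ b') (hb : b' ≤ b) : PiecewiseC1On γ a' b' := by
  obtain ⟨hcont, n, T, h0, hl, hm, hCD⟩ := h
  refine ⟨hcont.mono (Icc_subset_Icc ha hb), ?_⟩
  rcases Nat.eq_zero_or_pos n with hn | hn
  · subst hn
    have hba : b ≤ a := by rw [← h0, ← hl]; exact le_rfl
    have : a' = b' := le_antisymm hab (hb.trans (hba.trans ha))
    exact ⟨0, fun _ => a', rfl, this, monotone_const, fun i => i.elim0⟩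
  · refine ⟨n, fun i => max (min (T i) b') a', ?_, ?_, ?_, ?_⟩
    · show T 0 ⊓ b' ⊔ a' = a'
      rw [h0, min_eq_left (ha.trans hab), max_eq_right ha]
    · show T (Fin.last n) ⊓ b' ⊔ a' = b'
      rw [hl, min_eq_right hb, max_eq_left hab]
    · intro i j hij
      exact max_le_max (min_le_min (hm hij) le_rfl) le_rfl
    · intro i
      simp only
      rcases lt_or_ge (T i.succ) a' with hc1 | hc1
      · -- degenerate: both clamp to a'
        have e1 : max (min (T i.castSucc) b') a' = a' := by
          rw [max_eq_right]
          exact (min_le_left _ _).trans ((hm (Fin.castSucc_le_succ i)).trans hc1.le)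
        have e2 : max (min (T i.succ) b') a' = a' := by
          rw [max_eq_right]
          exact (min_le_left _ _).trans hc1.le
        rw [e1, e2, Icc_self]
        obtain ⟨i₀, hi₀⟩ := exists_mem_Icc_piece hm hn (h0 ▸ ha) (hl ▸ (hab.trans hb))
        exact (hCD i₀).mono (singleton_subset_iff.mpr hi₀)
      rcases lt_or_ge b' (T i.castSucc) with hc2 | hc2
      · have e1 : max (min (T i.castSucc) b') a' = b' := by
          rw [min_eq_right hc2.le, max_eq_left hab]
        have e2 : max (min (T i.succ) b') a' = b' := by
          rw [min_eq_right (hc2.le.trans (hm (Fin.castSucc_le_succ i))), max_eq_left hab]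
        rw [e1, e2, Icc_self]
        obtain ⟨i₀, hi₀⟩ := exists_mem_Icc_piece hm hn (h0 ▸ (ha.trans hab)) (hl ▸ hb)
        exact (hCD i₀).mono (singleton_subset_iff.mpr hi₀)
      · refine (hCD i).mono (Icc_subset_Icc ?_ ?_)
        · rw [min_eq_left hc2]
          exact le_max_left _ _
        · exact max_le ((min_le_left _ _)) hc1

lemma PiecewiseC1On.of_contDiffOn {γ : ℝ → Ed d} {a b : ℝ} (hab : a ≤ b)
    (h : ContDiffOn ℝ 1 γ (Icc a b)) : PiecewiseC1On γ a b := by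
  refine ⟨h.continuousOn, 1, fun i => if i.val = 0 then a else b, if_pos rfl, if_neg (by simp), ?_, ?_⟩
  · intro i j hij
    rw [Fin.le_def] at hij
    by_cases hi : i.val = 0 <;> by_cases hj : j.val = 0
    · simp [hi, hj]
    · simp [hi, hj, hab]
    · omega
    · simp [hi, hj]
  · intro i
    have hi : i.val = 0 := by omega
    have h1 : (i.castSucc).val = 0 := hi
    have h2 : (i.succ).val = 1 := by simp [Fin.val_succ, hi]
    have h2' : (i.succ).val ≠ 0 := by omega
    simp only [h1, h2', if_true, if_false, ite_true, ite_false]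
    simpa using h

lemma PiecewiseC1On.shift {γ : ℝ → Ed d} {a b : ℝ} (h : PiecewiseC1On γ a b) (c : ℝ) :
    PiecewiseC1On (fun s => γ (s + c)) (a - c) (b - c) := by
  obtain ⟨hcont, n, T, h0, hl, hm, hCD⟩ := h
  have hoc : Continuous (fun s : ℝ => s + c) := by continuity
  refine ⟨hcont.comp hoc.continuousOn (fun s hs => ⟨by linarith [hs.1], by linarith [hs.2]⟩),
    n, fun i => T i - c, ?_, ?_, ?_, ?_⟩
  · show T 0 - c = a - c
    rw [h0]
  · show T (Fin.last n) - c = b - c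
    rw [hl]
  · intro i j hij
    show T i - c ≤ T j - c
    linarith [hm hij]
  · intro i
    have hcd : ContDiffOn ℝ 1 (fun s : ℝ => s + c)
        (Icc (T i.castSucc - c) (T i.succ - c)) := (contDiff_id.add contDiff_const).contDiffOn
    refine (hCD i).comp hcd (fun s hs => ?_)
    have h1 : T i.castSucc - c ≤ s := hs.1
    have h2 : s ≤ T i.succ - c := hs.2
    exact ⟨by linarith, by linarith⟩

lemma continuousOn_Icc_union {f : ℝ → Ed d} {a b c : ℝ}
    (h1 : ContinuousOn f (Icc a b)) (h2 : ContinuousOn f (Icc b c)) :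
    ContinuousOn f (Icc a c) := by
  intro s hs
  have hsub : Icc a c ⊆ Icc a b ∪ Icc b c := by
    intro t ht
    rcases le_or_gt t b with h | h
    · exact Or.inl ⟨ht.1, h⟩
    · exact Or.inr ⟨h.le, ht.2⟩
  have hcwa : ContinuousWithinAt f (Icc a b ∪ Icc b c) s := by
    rcases lt_trichotomy s b with h | h | h
    · refine (h1 s ⟨hs.1, h.le⟩).union (continuousWithinAt_of_notMem_closure ?_)
      rw [isClosed_Icc.closure_eq]
      exact fun hc => absurd hc.1 (not_le.mpr h)
    · subst h
      exact (h1 s ⟨hs.1, le_rfl⟩).union (h2 s ⟨le_rfl, hs.2⟩)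
    · refine (continuousWithinAt_of_notMem_closure ?_).union (h2 s ⟨h.le, hs.2⟩)
      rw [isClosed_Icc.closure_eq]
      exact fun hc => absurd hc.2 (not_le.mpr h)
  exact hcwa.mono hsub

lemma PiecewiseC1On.glue {f g : ℝ → Ed d} {a b c : ℝ}
    (hf : PiecewiseC1On f a b) (hg : PiecewiseC1On g b c) (hfg : f b = g b) :
    PiecewiseC1On (fun s => if s ≤ b then f s else g s) a c := by
  have hab : a ≤ b := hf.endpoint_le
  have hbc : b ≤ c := hg.endpoint_le
  obtain ⟨hfc, n, T1, hT10, hT1l, hm1, hCD1⟩ := hf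
  obtain ⟨hgc, m, T2, hT20, hT2l, hm2, hCD2⟩ := hg
  have hT1b : ∀ j : Fin (n+1), T1 j ≤ b := fun j => hT1l ▸ hm1 (Fin.le_last j)
  have hT2b : ∀ j : Fin (m+1), b ≤ T2 j := fun j => hT20 ▸ hm2 (Fin.zero_le j)
  constructor
  · refine continuousOn_Icc_union (b := b) ?_ ?_
    · exact hfc.congr (fun s hs => by simp [hs.2])
    · refine hgc.congr (fun s hs => ?_)
      rcases lt_or_eq_of_le hs.1 with h | h
      · simp [not_le.mpr h]
      · simp [← h, hfg]
  · classical
    set T' : Fin (n + m + 1) → ℝ :=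
      fun i => if h : i.val ≤ n then T1 ⟨i.val, by omega⟩ else T2 ⟨i.val - n, by omega⟩ with hT'
    have hT'app : ∀ (i : Fin (n + m + 1)) (h : i.val ≤ n), T' i = T1 ⟨i.val, by omega⟩ := by
      intro i h
      rw [hT']
      exact dif_pos h
    have hT'app2 : ∀ (i : Fin (n + m + 1)) (h : ¬ i.val ≤ n), T' i = T2 ⟨i.val - n, by omega⟩ := by
      intro i h
      rw [hT']
      exact dif_neg h
    have hT'gen : ∀ (i : Fin (n + m + 1)) (h : n ≤ i.val), T' i = T2 ⟨i.val - n, by omega⟩ := by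
      intro i h
      rcases Nat.lt_or_ge n i.val with hlt | hge
      · exact hT'app2 i (by omega)
      · have hieq : i.val = n := by omega
        rw [hT'app i (by omega)]
        have e1 : (⟨i.val, by omega⟩ : Fin (n+1)) = Fin.last n := by ext; simpa using hieq
        have e2 : (⟨i.val - n, by omega⟩ : Fin (m+1)) = 0 := by ext; simp; omega
        rw [e1, e2, hT1l, hT20]
    refine ⟨n + m, T', ?_, ?_, ?_, ?_⟩
    · rw [hT'app 0 (Nat.zero_le n)]
      exact hT10
    · rw [hT'gen (Fin.last (n+m)) (by simp)]
      have e : (⟨(Fin.last (n+m)).val - n, by omega⟩ : Fin (m+1)) = Fin.last m := by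
        ext; simp
      rw [e, hT2l]
    · intro i j hij
      rw [Fin.le_def] at hij
      by_cases hi : i.val ≤ n <;> by_cases hj : j.val ≤ n
      · rw [hT'app i hi, hT'app j hj]
        exact hm1 (by rw [Fin.le_def]; simpa using hij)
      · rw [hT'app i hi, hT'app2 j hj]
        calc T1 ⟨i.val, by omega⟩ ≤ b := hT1b _
          _ ≤ T2 ⟨j.val - n, by omega⟩ := hT2b _
      · omega
      · rw [hT'app2 i hi, hT'app2 j hj]
        exact hm2 (by rw [Fin.le_def]; simp; omega)
    · intro i
      have hcsval : (i.castSucc : Fin (n+m+1)).val = i.val := rfl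
      have hsuccval : (i.succ : Fin (n+m+1)).val = i.val + 1 := rfl
      by_cases hi : i.val < n
      · rw [hT'app i.castSucc (by omega), hT'app i.succ (by omega)]
        have hpc := hCD1 ⟨i.val, hi⟩
        have hc1 : ((⟨i.val, hi⟩ : Fin n).castSucc : Fin (n+1)) = ⟨(i.castSucc).val, by omega⟩ := by
          ext; simp [hcsval]
        have hc2 : ((⟨i.val, hi⟩ : Fin n).succ : Fin (n+1)) = ⟨(i.succ).val, by omega⟩ := by
          ext; simp [hsuccval]
        rw [hc1, hc2] at hpc
        refine hpc.congr (fun s hs => ?_)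
        have hsb : s ≤ b := hs.2.trans (hT1b _)
        simp [hsb]
      · rw [hT'gen i.castSucc (by omega), hT'gen i.succ (by omega)]
        have hilt : i.val - n < m := by have := i.isLt; omega
        have hpc := hCD2 ⟨i.val - n, hilt⟩
        have hc1 : ((⟨i.val - n, hilt⟩ : Fin m).castSucc : Fin (m+1))
            = ⟨(i.castSucc).val - n, by omega⟩ := by
          ext; simp [hcsval]
        have hc2 : ((⟨i.val - n, hilt⟩ : Fin m).succ : Fin (m+1))
            = ⟨(i.succ).val - n, by omega⟩ := by
          ext; simp [hsuccval]; omega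
        rw [hc1, hc2] at hpc
        refine hpc.congr (fun s hs => ?_)
        have hbs : b ≤ s := (hT2b _).trans hs.1
        rcases lt_or_eq_of_le hbs with h | h
        · simp [not_le.mpr h]
        · simp [← h, hfg]

def Sset {d : ℕ} (La : Ed d → Ed d → ℝ) (u : Ed d → ℝ) (σ : ℝ) (x : Ed d) : Set ℝ :=
  {r | ∃ γ : ℝ → Ed d, PiecewiseC1On γ 0 σ ∧ γ σ = x ∧
    r = u (γ 0) + actionA La γ 0 σ}

lemma LOa_zero {La : Ed d → Ed d → ℝ} {u : Ed d → ℝ} (x : Ed d) : LOa La u 0 x = u x :=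
  if_pos rfl

lemma LOa_of_ne {La : Ed d → Ed d → ℝ} {u : Ed d → ℝ} {σ : ℝ} (hσ : σ ≠ 0) (x : Ed d) :
    LOa La u σ x = sInf (Sset La u σ x) := by
  rw [LOa, if_neg hσ]; rfl

open MeasureTheory in
lemma integrand_congr_ae {γ₁ γ₂ : ℝ → Ed d} {a b : ℝ} (hab : a ≤ b)
    (heq : EqOn γ₁ γ₂ (Icc a b)) (φ : Ed d → Ed d → ℝ) :
    ∀ᵐ s ∂(volume : Measure ℝ), s ∈ Set.uIoc a b → φ (γ₁ s) (deriv γ₁ s) = φ (γ₂ s) (deriv γ₂ s) := by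
  have hb : ∀ᵐ s ∂(volume : Measure ℝ), s ∉ ({b} : Set ℝ) :=
    measure_eq_zero_iff_ae_notMem.mp ((Set.finite_singleton b).measure_zero volume)
  filter_upwards [hb] with s hsb hsI
  rw [Set.uIoc_of_le hab] at hsI
  have hsIoo : s ∈ Ioo a b := ⟨hsI.1, lt_of_le_of_ne hsI.2 (by simpa using hsb)⟩
  have hev : γ₁ =ᶠ[nhds s] γ₂ :=
    Filter.eventually_of_mem (Ioo_mem_nhds hsIoo.1 hsIoo.2)
      (fun t ht => heq (Ioo_subset_Icc_self ht))
  rw [heq (Ioo_subset_Icc_self hsIoo), hev.deriv_eq]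

lemma actionA_congr {La : Ed d → Ed d → ℝ} {γ₁ γ₂ : ℝ → Ed d} {a b : ℝ} (hab : a ≤ b)
    (heq : EqOn γ₁ γ₂ (Icc a b)) : actionA La γ₁ a b = actionA La γ₂ a b :=
  intervalIntegral.integral_congr_ae (integrand_congr_ae hab heq La)

open MeasureTheory in
lemma intervalIntegrable_congr_of_eqOn {γ₁ γ₂ : ℝ → Ed d} {a b : ℝ} (hab : a ≤ b)
    (heq : EqOn γ₁ γ₂ (Icc a b)) (φ : Ed d → Ed d → ℝ)
    (h : IntervalIntegrable (fun s => φ (γ₂ s) (deriv γ₂ s)) volume a b) :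
    IntervalIntegrable (fun s => φ (γ₁ s) (deriv γ₁ s)) volume a b := by
  rw [intervalIntegrable_iff_integrableOn_Ioc_of_le hab] at h ⊢
  refine h.congr ?_
  refine (ae_restrict_iff' measurableSet_Ioc).mpr ?_
  filter_upwards [integrand_congr_ae hab heq φ] with s hs hmem
  exact (hs (by rwa [Set.uIoc_of_le hab])).symm

/-- The constant-speed segment from `p` (at time `α`) to `q` (at time `β`). -/
lemma segment_facts {p q : Ed d} {α β : ℝ} (h : α < β) :
    ContDiff ℝ 1 (fun s : ℝ => p + ((s - α)/(β-α)) • (q - p)) ∧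
    (fun s : ℝ => p + ((s - α)/(β-α)) • (q - p)) α = p ∧
    (fun s : ℝ => p + ((s - α)/(β-α)) • (q - p)) β = q ∧
    ∀ s, deriv (fun s : ℝ => p + ((s - α)/(β-α)) • (q - p)) s = (β-α)⁻¹ • (q - p) := by
  have hne : β - α ≠ 0 := ne_of_gt (by linarith)
  have hd : ∀ s : ℝ, HasDerivAt (fun s : ℝ => p + ((s - α)/(β-α)) • (q - p))
      ((β-α)⁻¹ • (q-p)) s := by
    intro s
    have h1 : HasDerivAt (fun s : ℝ => (s - α)/(β-α)) ((β-α)⁻¹) s := by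
      simpa using ((hasDerivAt_id s).sub_const α).div_const (β-α)
    have h2 := h1.smul_const (q - p)
    simpa using h2.const_add p
  refine ⟨?_, by simp, ?_, fun s => (hd s).deriv⟩
  · have hc : ContDiff ℝ 1 (fun s : ℝ => (s - α)/(β-α)) :=
      (contDiff_id.sub contDiff_const).div_const _
    exact contDiff_const.add (hc.smul contDiff_const)
  · simp [div_self hne]

lemma const_mem_Sset {La : Ed d → Ed d → ℝ} {u : Ed d → ℝ} {σ : ℝ} (hσ : 0 ≤ σ) (x : Ed d) :
    (u x + σ * La x 0) ∈ Sset La u σ x := by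
  refine ⟨fun _ => x, PiecewiseC1On.of_contDiffOn hσ contDiffOn_const, rfl, ?_⟩
  have : actionA La (fun _ => x) 0 σ = σ * La x 0 := by
    rw [actionA]
    have hder : (deriv (fun _ : ℝ => x)) = fun _ => 0 := by
      funext s; exact deriv_const s x
    simp only [hder]
    rw [intervalIntegral.integral_const]
    simp
  rw [this]

section Estimates

open MeasureTheory

variable {La : Ed d → Ed d → ℝ} {u : Ed d → ℝ}

lemma action_lower (hLaC : Continuous fun p : Ed d × Ed d => La p.1 p.2)
    {B : ℝ} (hB : ∀ x v, -B ≤ La x v) {γ : ℝ → Ed d} {a b : ℝ}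
    (h : PiecewiseC1On γ a b) : -B * (b - a) ≤ actionA La γ a b := by
  have hab := h.endpoint_le
  have hint := h.integrand_intervalIntegrable hLaC
  have hmono := intervalIntegral.integral_mono_on hab (intervalIntegrable_const (c := -B)) hint
    (fun s _ => hB (γ s) (deriv γ s))
  rw [intervalIntegral.integral_const, smul_eq_mul] at hmono
  calc -B * (b - a) = (b - a) * (-B) := by ring
    _ ≤ actionA La γ a b := hmono

lemma norm_deriv_integral_le (hLaC : Continuous fun p : Ed d × Ed d => La p.1 p.2)
    {B₁ : ℝ} (hB₁ : ∀ x v, ‖v‖ - B₁ ≤ La x v) {γ : ℝ → Ed d} {a b : ℝ}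
    (h : PiecewiseC1On γ a b) :
    ∫ s in a..b, ‖deriv γ s‖ ≤ actionA La γ a b + B₁ * (b - a) := by
  have hab := h.endpoint_le
  have hint := h.integrand_intervalIntegrable hLaC
  have hnorm : IntervalIntegrable (fun s => ‖deriv γ s‖) volume a b :=
    h.deriv_intervalIntegrable.norm
  have hmono := intervalIntegral.integral_mono_on hab
    (hnorm.sub (intervalIntegrable_const (c := B₁))) hint
    (fun s _ => hB₁ (γ s) (deriv γ s))
  rw [intervalIntegral.integral_sub hnorm intervalIntegrable_const,
    intervalIntegral.integral_const, smul_eq_mul] at hmono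
  rw [actionA]
  linarith

lemma Sset_lower (hLaC : Continuous fun p : Ed d × Ed d => La p.1 p.2)
    {m B : ℝ} (hB : ∀ x v, -B ≤ La x v) (hm : ∀ x, m ≤ u x)
    {σ : ℝ} (hσ : 0 ≤ σ) (x : Ed d) : ∀ r ∈ Sset La u σ x, m - B * σ ≤ r := by
  rintro r ⟨γ, hγ, hend, rfl⟩
  have h1 := action_lower hLaC hB hγ
  have h2 := hm (γ 0)
  have h3 : -B * (σ - 0) = -(B * σ) := by ring
  rw [h3] at h1
  linarith

lemma Sset_bddBelow (hLaC : Continuous fun p : Ed d × Ed d => La p.1 p.2)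
    {m B : ℝ} (hB : ∀ x v, -B ≤ La x v) (hm : ∀ x, m ≤ u x)
    {σ : ℝ} (hσ : 0 ≤ σ) (x : Ed d) : BddBelow (Sset La u σ x) :=
  ⟨m - B * σ, Sset_lower hLaC hB hm hσ x⟩

lemma LOa_lower (hLaC : Continuous fun p : Ed d × Ed d => La p.1 p.2)
    {m B : ℝ} (hB : ∀ x v, -B ≤ La x v) (hm : ∀ x, m ≤ u x) (hB0 : 0 ≤ B)
    {σ : ℝ} (hσ : 0 ≤ σ) (x : Ed d) : m - B * σ ≤ LOa La u σ x := by
  rcases eq_or_lt_of_le hσ with h0 | hpos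
  · rw [← h0, LOa_zero]
    have := hm x
    nlinarith
  · rw [LOa_of_ne (ne_of_gt hpos)]
    exact le_csInf ⟨_, const_mem_Sset hσ x⟩ (Sset_lower hLaC hB hm hσ x)

lemma LOa_upper (hLaC : Continuous fun p : Ed d × Ed d => La p.1 p.2)
    {C₁ : ℝ} (hC₁ : ∀ (x v : Ed d), ‖v‖ ≤ 1 → La x v ≤ C₁)
    {m B : ℝ} (hB : ∀ x v, -B ≤ La x v) (hm : ∀ x, m ≤ u x)
    {σ : ℝ} (hσ : 0 ≤ σ) (x : Ed d) : LOa La u σ x ≤ u x + σ * C₁ := by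
  rcases eq_or_lt_of_le hσ with h0 | hpos
  · rw [← h0, LOa_zero]; simp
  · rw [LOa_of_ne (ne_of_gt hpos)]
    have hle : u x + σ * La x 0 ≤ u x + σ * C₁ := by
      have := hC₁ x 0 (by simp)
      nlinarith
    exact (csInf_le (Sset_bddBelow hLaC hB hm hσ x) (const_mem_Sset hσ x)).trans hle

lemma LOa_append (hLa : TonelliAut La) (hu : Continuous u) (huper : IsZdPeriodic u) :
    ∃ C₁, 0 ≤ C₁ ∧ ∀ σ : ℝ, 0 ≤ σ → ∀ τ : ℝ, 0 < τ → ∀ x y : Ed d, ‖y - x‖ ≤ τ →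
      LOa La u (σ + τ) y ≤ LOa La u σ x + C₁ * τ := by
  obtain ⟨C₁, hC₁0, hC₁⟩ := hLa.upper 1
  obtain ⟨m, M, hmM⟩ := periodic_bounded u hu huper
  obtain ⟨B, hB0, hB⟩ := hLa.lower0
  have hLaC := hLa.continuous
  have hm : ∀ z, m ≤ u z := fun z => (hmM z).1
  refine ⟨C₁, hC₁0, fun σ hσ τ hτ x y hxy => ?_⟩
  have hσβ : σ < σ + τ := by linarith
  obtain ⟨hsegCD, hsegα, hsegβ, hsegD⟩ := segment_facts (p := x) (q := y) hσβ
  set seg : ℝ → Ed d := fun s => x + ((s - σ)/(σ + τ - σ)) • (y - x) with hseg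
  have hwnorm : ‖(σ + τ - σ)⁻¹ • (y - x)‖ ≤ 1 := by
    rw [norm_smul, norm_inv, Real.norm_eq_abs, abs_of_pos (show (0:ℝ) < σ + τ - σ by linarith)]
    have hττ : σ + τ - σ = τ := by ring
    rw [hττ]
    calc τ⁻¹ * ‖y - x‖ ≤ τ⁻¹ * τ :=
          mul_le_mul_of_nonneg_left hxy (inv_nonneg.mpr hτ.le)
      _ = 1 := inv_mul_cancel₀ (ne_of_gt hτ)
  have hsegIntEq : (fun s => La (seg s) (deriv seg s))
      = fun s => La (seg s) ((σ + τ - σ)⁻¹ • (y - x)) := funext fun s => by rw [hsegD s]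
  have hsegInt : IntervalIntegrable (fun s => La (seg s) (deriv seg s)) volume σ (σ + τ) := by
    rw [hsegIntEq]
    exact (hLaC.comp (hsegCD.continuous.prodMk continuous_const)).intervalIntegrable _ _
  have hsegAct : actionA La seg σ (σ + τ) ≤ C₁ * τ := by
    rw [actionA, hsegIntEq]
    have hmono := intervalIntegral.integral_mono_on hσβ.le
      (by rw [← hsegIntEq]; exact hsegInt)
      (intervalIntegrable_const (c := C₁))
      (fun s _ => hC₁ (seg s) _ hwnorm)
    rw [← hsegIntEq]  at hmono ⊢
    rw [intervalIntegral.integral_const, smul_eq_mul] at hmono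
    calc (∫ s in σ..(σ+τ), La (seg s) (deriv seg s)) ≤ (σ + τ - σ) * C₁ := hmono
      _ = C₁ * τ := by ring
  have key : ∀ (γ : ℝ → Ed d), PiecewiseC1On γ 0 σ → γ σ = x →
      LOa La u (σ + τ) y ≤ u (γ 0) + actionA La γ 0 σ + C₁ * τ := by
    intro γ hγ hγσ
    set Γ : ℝ → Ed d := fun s => if s ≤ σ then γ s else seg s with hΓ
    have hmatch : γ σ = seg σ := by rw [hγσ, hsegα]
    have hΓpc : PiecewiseC1On Γ 0 (σ + τ) :=
      hγ.glue (PiecewiseC1On.of_contDiffOn hσβ.le hsegCD.contDiffOn) hmatch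
    have hΓβ : Γ (σ + τ) = y := by
      rw [hΓ]
      simp only [if_neg (not_le.mpr hσβ)]
      exact hsegβ
    have hΓ0 : Γ 0 = γ 0 := by rw [hΓ]; simp only [if_pos hσ]
    have hEq1 : EqOn Γ γ (Icc 0 σ) := fun s hs => if_pos hs.2
    have hEq2 : EqOn Γ seg (Icc σ (σ + τ)) := by
      intro s hs
      rcases lt_or_eq_of_le hs.1 with h | h
      · exact if_neg (not_le.mpr h)
      · rw [hΓ]
        simp only
        rw [if_pos (le_of_eq h.symm), ← h]
        exact hmatch
    have hint1 : IntervalIntegrable (fun s => La (Γ s) (deriv Γ s)) volume 0 σ :=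
      intervalIntegrable_congr_of_eqOn hσ hEq1 La (hγ.integrand_intervalIntegrable hLaC)
    have hint2 : IntervalIntegrable (fun s => La (Γ s) (deriv Γ s)) volume σ (σ + τ) :=
      intervalIntegrable_congr_of_eqOn hσβ.le hEq2 La hsegInt
    have hsplit : actionA La Γ 0 (σ + τ) = actionA La Γ 0 σ + actionA La Γ σ (σ + τ) :=
      (intervalIntegral.integral_add_adjacent_intervals hint1 hint2).symm
    have ha1 : actionA La Γ 0 σ = actionA La γ 0 σ := actionA_congr hσ hEq1
    have ha2 : actionA La Γ σ (σ + τ) = actionA La seg σ (σ + τ) := actionA_congr hσβ.le hEq2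
    have hmem : u (Γ 0) + actionA La Γ 0 (σ + τ) ∈ Sset La u (σ + τ) y := ⟨Γ, hΓpc, hΓβ, rfl⟩
    have hbdd : BddBelow (Sset La u (σ + τ) y) :=
      Sset_bddBelow hLaC hB hm (by linarith) y
    rw [LOa_of_ne (by positivity) y]
    calc sInf (Sset La u (σ + τ) y) ≤ u (Γ 0) + actionA La Γ 0 (σ + τ) := csInf_le hbdd hmem
      _ = u (γ 0) + (actionA La γ 0 σ + actionA La seg σ (σ + τ)) := by
          rw [hΓ0, hsplit, ha1, ha2]
      _ ≤ u (γ 0) + actionA La γ 0 σ + C₁ * τ := by linarith [hsegAct]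
  rcases eq_or_lt_of_le hσ with h0 | hpos
  · subst h0
    have hkey := key (fun _ => x) (PiecewiseC1On.of_contDiffOn le_rfl contDiffOn_const) rfl
    have hact0 : actionA La (fun _ => x) 0 0 = 0 := intervalIntegral.integral_same
    rw [hact0] at hkey
    rw [LOa_zero x]
    linarith
  · rw [LOa_of_ne (ne_of_gt hpos) x]
    have hne : (Sset La u σ x).Nonempty := ⟨_, const_mem_Sset hσ x⟩
    have hall : ∀ r ∈ Sset La u σ x, LOa La u (σ + τ) y - C₁ * τ ≤ r := by
      rintro r ⟨γ, hγ, hγσ, rfl⟩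
      linarith [key γ hγ hγσ]
    linarith [le_csInf hne hall]

lemma LOa_lb (hLa : TonelliAut La) (hu : Continuous u) (huper : IsZdPeriodic u) :
    ∀ ε > 0, ∃ D, 0 ≤ D ∧ ∀ σ : ℝ, 0 ≤ σ → ∀ x : Ed d, u x - ε - D * σ ≤ LOa La u σ x := by
  intro ε hε
  obtain ⟨m, M, hmM⟩ := periodic_bounded u hu huper
  obtain ⟨δ, hδ, hδ'⟩ := periodic_unifCont u hu huper ε hε
  obtain ⟨BA, hBA⟩ := hLa.2.2.2 (max ((M - m)/δ) 0) (le_max_right _ _)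
  have hLaC := hLa.continuous
  set A := max ((M - m)/δ) 0 with hA
  have hA0 : 0 ≤ A := le_max_right _ _
  refine ⟨max BA 0, le_max_right _ _, fun σ hσ x => ?_⟩
  rcases eq_or_lt_of_le hσ with h0 | hpos
  · rw [← h0, LOa_zero]
    have h1 : 0 ≤ max BA 0 := le_max_right _ _
    nlinarith
  · rw [LOa_of_ne (ne_of_gt hpos)]
    refine le_csInf ⟨_, const_mem_Sset hσ x⟩ ?_
    rintro r ⟨γ, hγ, hγσ, rfl⟩
    have hintLa := hγ.integrand_intervalIntegrable hLaC
    have hnormInt : IntervalIntegrable (fun s => ‖deriv γ s‖) volume 0 σ :=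
      hγ.deriv_intervalIntegrable.norm
    have hmono := intervalIntegral.integral_mono_on hσ
      ((hnormInt.const_mul A).sub (intervalIntegrable_const (c := BA))) hintLa
      (fun s _ => hBA (γ s) (deriv γ s))
    rw [intervalIntegral.integral_sub (hnormInt.const_mul A) intervalIntegrable_const,
      intervalIntegral.integral_const_mul, intervalIntegral.integral_const, smul_eq_mul] at hmono
    have hftc : ‖γ σ - γ 0‖ ≤ ∫ s in (0:ℝ)..σ, ‖deriv γ s‖ :=
      hγ.norm_sub_le_integral le_rfl hσ le_rfl
    have haction : A * ‖x - γ 0‖ - BA * σ ≤ actionA La γ 0 σ := by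
      rw [actionA]
      have h1 : A * ‖γ σ - γ 0‖ ≤ A * ∫ s in (0:ℝ)..σ, ‖deriv γ s‖ :=
        mul_le_mul_of_nonneg_left hftc hA0
      rw [hγσ] at h1
      nlinarith
    have hux : u x - ε ≤ u (γ 0) + A * ‖x - γ 0‖ := by
      rcases le_or_gt ‖x - γ 0‖ δ with hcase | hcase
      · have := hδ' x (γ 0) hcase
        rw [abs_le] at this
        have h2 : 0 ≤ A * ‖x - γ 0‖ := mul_nonneg hA0 (norm_nonneg _)
        linarith [this.1]
      · have hMm : 0 ≤ M - m := by linarith [(hmM x).1, (hmM x).2]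
        have h3 : (M - m)/δ * δ ≤ A * ‖x - γ 0‖ := by
          have hd1 : (M - m)/δ ≤ A := le_max_left _ _
          have hd2 : (0:ℝ) ≤ (M - m)/δ := div_nonneg hMm hδ.le
          nlinarith
        rw [div_mul_cancel₀ _ (ne_of_gt hδ)] at h3
        have h4 := (hmM (γ 0)).1
        have h5 := (hmM x).2
        linarith
    have hD : BA ≤ max BA 0 := le_max_left _ _
    have hBAσ : BA * σ ≤ max BA 0 * σ := mul_le_mul_of_nonneg_right hD hσ
    linarith

set_option maxHeartbeats 1600000 in
lemma LOa_shrink (hLa : TonelliAut La) (hu : Continuous u) (huper : IsZdPeriodic u) :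
    ∀ a A εs : ℝ, 0 < a → a ≤ A → 0 < εs →
    ∃ δ, 0 < δ ∧ δ < a ∧ ∀ σ, a ≤ σ → σ ≤ A → ∀ δ', 0 < δ' → δ' ≤ δ → ∀ x : Ed d,
      LOa La u (σ - δ') x ≤ LOa La u σ x + εs := by
  intro a A εs ha haA hεs
  obtain ⟨m, M, hmM⟩ := periodic_bounded u hu huper
  have hm : ∀ z, m ≤ u z := fun z => (hmM z).1
  have hM : ∀ z, u z ≤ M := fun z => (hmM z).2
  have hmM' : m ≤ M := le_trans (hm 0) (hM 0)
  obtain ⟨B, hB0, hB⟩ := hLa.lower0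
  obtain ⟨B₁, hB₁0, hB₁⟩ := hLa.lower1
  obtain ⟨C₁, hC₁0, hC₁⟩ := hLa.upper 1
  have hLaC := hLa.continuous
  have hA0 : 0 < A := lt_of_lt_of_le ha haA
  set K : ℝ := (M - m) + C₁ * A + 1 + B₁ * A with hK
  have hKpos : 0 < K := by
    have h1 : 0 ≤ C₁ * A := by positivity
    have h2 : 0 ≤ B₁ * A := by positivity
    rw [hK]; nlinarith
  set V : ℝ := 2 * K / a with hV
  have hV0 : 0 ≤ V := by rw [hV]; positivity
  obtain ⟨CV, hCV0, hCV⟩ := hLa.upper V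
  obtain ⟨N', hN'⟩ := exists_nat_gt (max (2 * A * (CV + B) / εs) 1)
  obtain ⟨N, hNR, hN1, hNbig⟩ : ∃ N : ℝ, 0 < N ∧ 1 ≤ N ∧ 2 * A * (CV + B) / εs < N ∧ ∃ nn : ℕ, (nn:ℝ) = N := by
    refine ⟨(N':ℝ), ?_, ?_, ?_, ⟨N', rfl⟩⟩
    · calc (0:ℝ) < 1 := one_pos
        _ ≤ max (2 * A * (CV + B) / εs) 1 := le_max_right _ _
        _ < N' := hN'
    · exact le_of_lt (lt_of_le_of_lt (le_max_right _ _) hN')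
    · exact lt_of_le_of_lt (le_max_left _ _) hN'
  obtain ⟨hNbig, nn, hnn⟩ := hNbig
  have hNchoice : A / N * (CV + B) ≤ εs / 2 := by
    rw [div_lt_iff₀ hεs] at hNbig
    rw [div_mul_eq_mul_div, div_le_iff₀ hNR]
    nlinarith
  refine ⟨a / (2 * N), by positivity, ?_, fun σ hσa hσA δ' hδ'0 hδ'le x => ?_⟩
  · rw [div_lt_iff₀ (by positivity)]
    nlinarith
  have hσ0 : 0 < σ := lt_of_lt_of_le ha hσa
  have hLpos : 0 < σ / N := by positivity
  have hδ'lt : δ' ≤ σ / (2 * N) := le_trans hδ'le (by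
    rw [div_le_div_iff₀ (by positivity) (by positivity)]
    nlinarith)
  have hδ'ltL : δ' < σ / N := lt_of_le_of_lt hδ'lt (by
    rw [div_lt_div_iff₀ (by positivity) (by positivity)]
    nlinarith)
  -- near-minimizing curve
  set κ : ℝ := min (εs / 2) 1 with hκ
  have hκ0 : 0 < κ := lt_min (by linarith) one_pos
  have hSne : (Sset La u σ x).Nonempty := ⟨_, const_mem_Sset hσ0.le x⟩
  obtain ⟨r, hrmem, hrlt⟩ := Real.lt_sInf_add_pos hSne hκ0
  obtain ⟨γ, hγ, hγσ, hreq⟩ := hrmem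
  have hbddx := Sset_bddBelow (u := u) hLaC hB hm hσ0.le x
  have hFle : sInf (Sset La u σ x) ≤ u x + σ * C₁ :=
    (csInf_le hbddx (const_mem_Sset hσ0.le x)).trans (by
      have := hC₁ x 0 (by simp)
      nlinarith)
  have haction_le : actionA La γ 0 σ ≤ M - m + C₁ * A + 1 := by
    have h1 : u (γ 0) + actionA La γ 0 σ < u x + σ * C₁ + κ := by
      rw [← hreq]; exact lt_of_lt_of_le hrlt (by linarith)
    have h2 := hm (γ 0)
    have h3 := hM x
    have h4 : κ ≤ 1 := min_le_right _ _
    have h5 : σ * C₁ ≤ A * C₁ := mul_le_mul_of_nonneg_right hσA hC₁0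
    have h6 : A * C₁ = C₁ * A := by ring
    linarith
  have hKbound : ∫ s in (0:ℝ)..σ, ‖deriv γ s‖ ≤ K := by
    have h1 := norm_deriv_integral_le hLaC hB₁ hγ
    have h2 : B₁ * (σ - 0) ≤ B₁ * A := by
      have := mul_le_mul_of_nonneg_left hσA hB₁0
      linarith
    rw [hK]; linarith
  -- pigeonhole
  set sp : ℕ → ℝ := fun j => j * (σ / N) with hsp
  have hsp0 : sp 0 = 0 := by simp [hsp]
  have hspN : sp nn = σ := by
    rw [hsp]
    simp only
    rw [hnn]
    field_simp
  have hspmono : ∀ j k : ℕ, j ≤ k → sp j ≤ sp k := by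
    intro j k hjk
    show (j:ℝ) * (σ / N) ≤ (k:ℝ) * (σ / N)
    have hjk' : (j:ℝ) ≤ k := by exact_mod_cast hjk
    exact mul_le_mul_of_nonneg_right hjk' hLpos.le
  have hsprange : ∀ j : ℕ, j ≤ nn → 0 ≤ sp j ∧ sp j ≤ σ := by
    intro j hj
    constructor
    · rw [← hsp0]; exact hspmono 0 j (Nat.zero_le j)
    · rw [← hspN]; exact hspmono j nn hj
  have hnormint : IntervalIntegrable (fun s => ‖deriv γ s‖) volume 0 σ :=
    hγ.deriv_intervalIntegrable.norm
  have hsub : ∀ c e : ℝ, 0 ≤ c → c ≤ e → e ≤ σ →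
      IntervalIntegrable (fun s => ‖deriv γ s‖) volume c e := by
    intro c e h1 h2 h3
    refine hnormint.mono_set ?_
    rw [uIcc_of_le h2, uIcc_of_le hσ0.le]
    exact Icc_subset_Icc h1 h3
  have hpieceint : ∀ k, k < nn → IntervalIntegrable (fun s => ‖deriv γ s‖) volume (sp k) (sp (k+1)) := by
    intro k hk
    exact hsub _ _ (hsprange k (by omega)).1 (hspmono k (k+1) (by omega)) (hsprange (k+1) (by omega)).2
  have hsum : ∑ k ∈ Finset.range nn, ∫ s in (sp k)..(sp (k+1)), ‖deriv γ s‖ = ∫ s in (0:ℝ)..σ, ‖deriv γ s‖ := by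
    have := intervalIntegral.sum_integral_adjacent_intervals (a := sp) (n := nn)
      (μ := volume) (f := fun s => ‖deriv γ s‖) hpieceint
    rwa [hsp0, hspN] at this
  have hnn0 : nn ≠ 0 := by
    intro hc
    rw [hc] at hnn
    simp at hnn
    rw [← hnn] at hN1
    linarith
  have hpigeon : ∃ j, j < nn ∧ (∫ s in (sp j)..(sp (j+1)), ‖deriv γ s‖) ≤ K / N := by
    by_contra hcon
    push_neg at hcon
    have hlt : ∀ j ∈ Finset.range nn, K / N < ∫ s in (sp j)..(sp (j+1)), ‖deriv γ s‖ := by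
      intro j hj
      exact hcon j (Finset.mem_range.mp hj)
    have hsumlt : ∑ _k ∈ Finset.range nn, K / N
        < ∑ k ∈ Finset.range nn, ∫ s in (sp k)..(sp (k+1)), ‖deriv γ s‖ :=
      Finset.sum_lt_sum_of_nonempty (by simpa using Finset.nonempty_range_iff.mpr hnn0) hlt
    rw [Finset.sum_const, Finset.card_range, nsmul_eq_mul, hnn,
      mul_div_cancel₀ K (ne_of_gt hNR), hsum] at hsumlt
    linarith
  obtain ⟨j, hjN, hjsmall⟩ := hpigeon
  set s₁ : ℝ := sp j with hs₁
  set s₂ : ℝ := sp (j+1) with hs₂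
  have hs₁0 : 0 ≤ s₁ := (hsprange j (by omega)).1
  have hs₂σ : s₂ ≤ σ := (hsprange (j+1) (by omega)).2
  have hs₁₂ : s₂ - s₁ = σ / N := by
    rw [hs₁, hs₂]
    show (((j+1):ℕ):ℝ) * (σ / N) - ((j:ℕ):ℝ) * (σ / N) = σ / N
    push_cast
    ring
  have hs₁lt : s₁ < s₂ - δ' := by linarith [hδ'ltL]
  have hs₂δ : s₂ - δ' ≤ σ - δ' := by linarith
  have hs₁s₂ : s₁ ≤ s₂ := by linarith
  have hftc : ‖γ s₂ - γ s₁‖ ≤ K / N :=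
    le_trans (hγ.norm_sub_le_integral hs₁0 hs₁s₂ hs₂σ) hjsmall
  obtain ⟨hsegCD, hsegα, hsegβ, hsegD⟩ := segment_facts (p := γ s₁) (q := γ s₂) hs₁lt
  set seg : ℝ → Ed d := fun s => γ s₁ + ((s - s₁)/(s₂ - δ' - s₁)) • (γ s₂ - γ s₁) with hseg
  have hden : σ/(2*N) ≤ s₂ - δ' - s₁ := by
    have h1 : σ/N = 2*(σ/(2*N)) := by ring
    linarith [hδ'lt]
  have hdenpos : 0 < s₂ - δ' - s₁ := lt_of_lt_of_le (by positivity) hden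
  have hwnorm : ‖(s₂ - δ' - s₁)⁻¹ • (γ s₂ - γ s₁)‖ ≤ V := by
    rw [norm_smul, norm_inv, Real.norm_eq_abs, abs_of_pos hdenpos]
    have h1 : (s₂ - δ' - s₁)⁻¹ ≤ (σ/(2*N))⁻¹ := by
      apply inv_anti₀ (by positivity) hden
    calc (s₂ - δ' - s₁)⁻¹ * ‖γ s₂ - γ s₁‖ ≤ (σ/(2*N))⁻¹ * (K/N) :=
          mul_le_mul h1 hftc (norm_nonneg _) (by positivity)
      _ = 2*K/σ := by
          field_simp
      _ ≤ 2*K/a := div_le_div_of_nonneg_left (by positivity) ha hσa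
      _ = V := by rw [hV]
  have hsegIntEq : (fun s => La (seg s) (deriv seg s))
      = fun s => La (seg s) ((s₂ - δ' - s₁)⁻¹ • (γ s₂ - γ s₁)) := funext fun s => by rw [hsegD s]
  have hsegInt : IntervalIntegrable (fun s => La (seg s) (deriv seg s)) volume s₁ (s₂ - δ') := by
    rw [hsegIntEq]
    exact (hLaC.comp (hsegCD.continuous.prodMk continuous_const)).intervalIntegrable _ _
  have hsegAct : actionA La seg s₁ (s₂ - δ') ≤ CV * (σ / N) := by
    have hint2 : IntervalIntegrable
        (fun s => La (seg s) ((s₂ - δ' - s₁)⁻¹ • (γ s₂ - γ s₁))) volume s₁ (s₂ - δ') :=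
      (hLaC.comp (hsegCD.continuous.prodMk continuous_const)).intervalIntegrable _ _
    have hmono := intervalIntegral.integral_mono_on hs₁lt.le hint2
      (intervalIntegrable_const (c := CV)) (fun s _ => hCV (seg s) _ hwnorm)
    rw [intervalIntegral.integral_const, smul_eq_mul] at hmono
    have heq2 : actionA La seg s₁ (s₂ - δ')
        = ∫ s in s₁..(s₂ - δ'), La (seg s) ((s₂ - δ' - s₁)⁻¹ • (γ s₂ - γ s₁)) := by
      rw [actionA, hsegIntEq]
    rw [heq2]
    have hCVd : (s₂ - δ' - s₁) * CV ≤ σ/N * CV :=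
      mul_le_mul_of_nonneg_right (by linarith) hCV0
    linarith
  -- the surgery curve
  have hγ1pc : PiecewiseC1On γ 0 s₁ := hγ.mono le_rfl hs₁0 (by linarith)
  have hsegpc : PiecewiseC1On seg s₁ (s₂ - δ') :=
    PiecewiseC1On.of_contDiffOn hs₁lt.le hsegCD.contDiffOn
  have hmatch1 : γ s₁ = seg s₁ := hsegα.symm
  set g₁ : ℝ → Ed d := fun s => if s ≤ s₁ then γ s else seg s with hg₁
  have hg₁pc : PiecewiseC1On g₁ 0 (s₂ - δ') := hγ1pc.glue hsegpc hmatch1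
  have hγ2pc : PiecewiseC1On γ s₂ σ := hγ.mono (by linarith) (by linarith) le_rfl
  have hshpc : PiecewiseC1On (fun s => γ (s + δ')) (s₂ - δ') (σ - δ') := by
    have := hγ2pc.shift δ'
    exact this
  have hmatch2 : g₁ (s₂ - δ') = (fun s => γ (s + δ')) (s₂ - δ') := by
    show (if s₂ - δ' ≤ s₁ then γ (s₂ - δ') else seg (s₂ - δ')) = γ ((s₂ - δ') + δ')
    rw [if_neg (not_le.mpr hs₁lt), hsegβ, sub_add_cancel]
  set Γ : ℝ → Ed d := fun s => if s ≤ s₂ - δ' then g₁ s else γ (s + δ') with hΓ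
  have hΓpc : PiecewiseC1On Γ 0 (σ - δ') := hg₁pc.glue hshpc hmatch2
  have hΓ0 : Γ 0 = γ 0 := by
    show (if (0:ℝ) ≤ s₂ - δ' then g₁ 0 else γ (0 + δ')) = γ 0
    rw [if_pos (by linarith : (0:ℝ) ≤ s₂ - δ')]
    show (if (0:ℝ) ≤ s₁ then γ 0 else seg 0) = γ 0
    rw [if_pos hs₁0]
  have hΓend : Γ (σ - δ') = x := by
    show (if σ - δ' ≤ s₂ - δ' then g₁ (σ - δ') else γ ((σ - δ') + δ')) = x
    rcases le_or_gt (σ - δ') (s₂ - δ') with hc | hc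
    · rw [if_pos hc]
      have hs₂σ' : s₂ = σ := le_antisymm hs₂σ (by linarith)
      show (if σ - δ' ≤ s₁ then γ (σ - δ') else seg (σ - δ')) = x
      rw [if_neg (not_le.mpr (by linarith : s₁ < σ - δ'))]
      rw [show σ - δ' = s₂ - δ' by rw [hs₂σ'], hsegβ, hs₂σ', hγσ]
    · rw [if_neg (not_le.mpr hc), sub_add_cancel, hγσ]
  have hE1 : EqOn Γ γ (Icc 0 s₁) := by
    intro s hs
    have h1 : s ≤ s₂ - δ' := le_trans hs.2 (by linarith)
    show (if s ≤ s₂ - δ' then g₁ s else γ (s + δ')) = γ s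
    rw [if_pos h1]
    show (if s ≤ s₁ then γ s else seg s) = γ s
    rw [if_pos hs.2]
  have hE2 : EqOn Γ seg (Icc s₁ (s₂ - δ')) := by
    intro s hs
    show (if s ≤ s₂ - δ' then g₁ s else γ (s + δ')) = seg s
    rw [if_pos hs.2]
    show (if s ≤ s₁ then γ s else seg s) = seg s
    rcases lt_or_eq_of_le hs.1 with h | h
    · rw [if_neg (not_le.mpr h)]
    · rw [← h, if_pos le_rfl, hmatch1]
  have hE3 : EqOn Γ (fun s => γ (s + δ')) (Icc (s₂ - δ') (σ - δ')) := by
    intro s hs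
    show (if s ≤ s₂ - δ' then g₁ s else γ (s + δ')) = γ (s + δ')
    rcases lt_or_eq_of_le hs.1 with h | h
    · rw [if_neg (not_le.mpr h)]
    · rw [← h, if_pos le_rfl]
      exact hmatch2
  have hsubLa : ∀ c e : ℝ, 0 ≤ c → c ≤ e → e ≤ σ →
      IntervalIntegrable (fun s => La (γ s) (deriv γ s)) volume c e := by
    intro c e h1 h2 h3
    refine (hγ.integrand_intervalIntegrable hLaC).mono_set ?_
    rw [uIcc_of_le h2, uIcc_of_le hσ0.le]
    exact Icc_subset_Icc h1 h3
  have hI1 : IntervalIntegrable (fun s => La (Γ s) (deriv Γ s)) volume 0 s₁ :=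
    intervalIntegrable_congr_of_eqOn hs₁0 hE1 La (hsubLa 0 s₁ le_rfl hs₁0 (by linarith))
  have hI2 : IntervalIntegrable (fun s => La (Γ s) (deriv Γ s)) volume s₁ (s₂ - δ') :=
    intervalIntegrable_congr_of_eqOn hs₁lt.le hE2 La hsegInt
  have heq3 : (fun s => La ((fun t => γ (t + δ')) s) (deriv (fun t => γ (t + δ')) s))
      = (fun s => La (γ (s + δ')) (deriv γ (s + δ'))) := by
    funext s
    simp only
    rw [deriv_comp_add_const]
  have hI3 : IntervalIntegrable (fun s => La (Γ s) (deriv Γ s)) volume (s₂ - δ') (σ - δ') := by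
    have hbase : IntervalIntegrable (fun s => La (γ s) (deriv γ s)) volume s₂ σ :=
      hsubLa s₂ σ (by linarith) (by linarith) le_rfl
    have hsh : IntervalIntegrable
        (fun s => La ((fun t => γ (t + δ')) s) (deriv (fun t => γ (t + δ')) s))
        volume (s₂ - δ') (σ - δ') := by
      rw [heq3]
      exact hbase.comp_add_right δ'
    exact intervalIntegrable_congr_of_eqOn (by linarith) hE3 La hsh
  have hA1 : actionA La Γ 0 s₁ = actionA La γ 0 s₁ := actionA_congr hs₁0 hE1
  have hA2 : actionA La Γ s₁ (s₂ - δ') = actionA La seg s₁ (s₂ - δ') :=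
    actionA_congr hs₁lt.le hE2
  have hA3 : actionA La Γ (s₂ - δ') (σ - δ') = actionA La γ s₂ σ := by
    rw [actionA_congr (by linarith : s₂ - δ' ≤ σ - δ') hE3]
    rw [actionA, actionA, heq3]
    rw [intervalIntegral.integral_comp_add_right (fun s => La (γ s) (deriv γ s)) δ']
    rw [sub_add_cancel, sub_add_cancel]
  have hsplitΓ : actionA La Γ 0 (σ - δ')
      = actionA La Γ 0 s₁ + actionA La Γ s₁ (s₂ - δ') + actionA La Γ (s₂ - δ') (σ - δ') := by
    have h12 := intervalIntegral.integral_add_adjacent_intervals hI1 hI2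
    have h123 := intervalIntegral.integral_add_adjacent_intervals (hI1.trans hI2) hI3
    rw [actionA, actionA, actionA, actionA]
    linarith
  have hsplitγ : actionA La γ 0 σ
      = actionA La γ 0 s₁ + actionA La γ s₁ s₂ + actionA La γ s₂ σ := by
    have h12 := intervalIntegral.integral_add_adjacent_intervals
      (hsubLa 0 s₁ le_rfl hs₁0 (by linarith)) (hsubLa s₁ s₂ hs₁0 hs₁s₂ hs₂σ)
    have h123 := intervalIntegral.integral_add_adjacent_intervals
      ((hsubLa 0 s₁ le_rfl hs₁0 (by linarith)).trans (hsubLa s₁ s₂ hs₁0 hs₁s₂ hs₂σ))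
      (hsubLa s₂ σ (by linarith) (by linarith) le_rfl)
    rw [actionA, actionA, actionA, actionA]
    linarith
  have hmidlb : -B * (s₂ - s₁) ≤ actionA La γ s₁ s₂ :=
    action_lower hLaC hB (hγ.mono hs₁0 hs₁s₂ hs₂σ)
  have hfinal : u (Γ 0) + actionA La Γ 0 (σ - δ') ≤ r + εs / 2 := by
    rw [hΓ0, hsplitΓ, hA1, hA2, hA3]
    have h2 : -B * (σ/N) ≤ actionA La γ s₁ s₂ := by rw [← hs₁₂]; exact hmidlb
    have hσN : σ / N ≤ A / N := by gcongr
    have hcost : CV * (σ/N) + B * (σ/N) ≤ εs / 2 := by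
      have h3 : (CV + B) * (σ/N) ≤ (CV + B) * (A/N) :=
        mul_le_mul_of_nonneg_left hσN (by linarith)
      have h4 : A/N * (CV + B) = (CV + B) * (A/N) := by ring
      have h5 : (CV + B) * (σ/N) = CV * (σ/N) + B * (σ/N) := by ring
      linarith [hNchoice]
    have hru : r = u (γ 0) + actionA La γ 0 σ := hreq
    rw [hsplitγ] at hru
    linarith
  have hσδpos : 0 < σ - δ' := by
    have h2 : a / (2*N) ≤ a/2 := div_le_div_of_nonneg_left ha.le (by linarith) (by linarith)
    linarith [hδ'le]
  have hbdd2 := Sset_bddBelow (u := u) hLaC hB hm hσδpos.le x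
  have hmem2 : u (Γ 0) + actionA La Γ 0 (σ - δ') ∈ Sset La u (σ - δ') x := ⟨Γ, hΓpc, hΓend, rfl⟩
  rw [LOa_of_ne (ne_of_gt hσδpos) x, LOa_of_ne (ne_of_gt hσ0) x]
  have hκε : κ ≤ εs / 2 := min_le_left _ _
  calc sInf (Sset La u (σ - δ') x) ≤ u (Γ 0) + actionA La Γ 0 (σ - δ') := csInf_le hbdd2 hmem2
    _ ≤ r + εs / 2 := hfinal
    _ ≤ sInf (Sset La u σ x) + κ + εs / 2 := by linarith [hrlt]
    _ ≤ sInf (Sset La u σ x) + εs := by linarith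

lemma LOa_close (hLa : TonelliAut La) (hu : Continuous u) (huper : IsZdPeriodic u) :
    ∀ t₀ : ℝ, 0 < t₀ → ∀ ε : ℝ, 0 < ε → ∃ δ, 0 < δ ∧
      ∀ σ σ' : ℝ, ∀ x y : Ed d, t₀/2 ≤ σ → σ ≤ 4*t₀ → t₀/2 ≤ σ' → σ' ≤ 4*t₀ →
        |σ - σ'| ≤ δ → ‖x - y‖ ≤ δ → LOa La u σ' y ≤ LOa La u σ x + ε := by
  intro t₀ ht₀ ε hε
  obtain ⟨C₁, hC₁0, happ⟩ := LOa_append hLa hu huper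
  obtain ⟨δsh, hδsh0, hδsha, hsh⟩ := LOa_shrink hLa hu huper (t₀/2) (4*t₀) (ε/2)
    (by linarith) (by linarith) (by linarith)
  obtain ⟨δ, hδdef⟩ : ∃ δ : ℝ, δ = min (δsh/2) (ε/(6*(C₁+1))) := ⟨_, rfl⟩
  have hδ0 : 0 < δ := by rw [hδdef]; exact lt_min (by linarith) (by positivity)
  refine ⟨δ, hδ0, fun σ σ' x y hσ1 hσ2 hσ'1 hσ'2 hss hxy => ?_⟩
  have hδle1 : δ ≤ δsh/2 := by rw [hδdef]; exact min_le_left _ _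
  have hδle2 : δ ≤ ε/(6*(C₁+1)) := by rw [hδdef]; exact min_le_right _ _
  have habs := abs_le.mp hss
  obtain ⟨τ, hτdef⟩ : ∃ τ : ℝ, τ = σ' - σ + 2*δ := ⟨_, rfl⟩
  have hτlb : δ ≤ τ := by rw [hτdef]; linarith [habs.2]
  have hτub : τ ≤ 3*δ := by rw [hτdef]; linarith [habs.1]
  have hτ0 : 0 < τ := lt_of_lt_of_le hδ0 hτlb
  have hshr : LOa La u (σ - 2*δ) x ≤ LOa La u σ x + ε/2 :=
    hsh σ hσ1 hσ2 (2*δ) (by linarith) (by linarith) x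
  have hσ2δ : 0 ≤ σ - 2*δ := by linarith [hδsha]
  have happ2 := happ (σ - 2*δ) hσ2δ τ hτ0 x y (by
    rw [norm_sub_rev] at hxy
    linarith)
  have hady : σ - 2*δ + τ = σ' := by rw [hτdef]; ring
  rw [hady] at happ2
  have hC₁τ : C₁ * τ ≤ ε/2 := by
    have hne : (0:ℝ) < C₁ + 1 := by linarith
    have hQ : (C₁+1) * (ε/(6*(C₁+1))) = ε/6 := by
      field_simp
    have h6 : (C₁+1)*δ ≤ ε/6 := by
      rw [← hQ]
      exact mul_le_mul_of_nonneg_left hδle2 (by linarith)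
    calc C₁ * τ ≤ C₁ * (3*δ) := mul_le_mul_of_nonneg_left hτub hC₁0
      _ ≤ (C₁+1)*(3*δ) := by nlinarith
      _ = 3*((C₁+1)*δ) := by ring
      _ ≤ 3*(ε/6) := by linarith
      _ = ε/2 := by ring
  linarith

lemma LOnew_zero (x : Ed d) : LOnew La u 0 x = u x := by
  have hset : {r | ∃ σ : ℝ, (0:ℝ) ≤ σ ∧ σ ≤ 2*0 ∧ r = LOa La u σ x} = {u x} := by
    ext r
    simp only [Set.mem_setOf_eq, Set.mem_singleton_iff]
    constructor
    · rintro ⟨σ, h1, h2, h3⟩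
      have hσ : σ = 0 := le_antisymm (by linarith) h1
      rw [hσ, LOa_zero] at h3
      exact h3
    · intro h
      exact ⟨0, le_rfl, by norm_num, by rw [LOa_zero]; exact h⟩
  rw [LOnew, hset, csInf_singleton]

end Estimates

/-- `(t,x) ↦ T̃ᵃ_t u (x)` is continuous on `[0,∞) × ℝ^d`. -/
theorem LOnew_continuousOn
    {d : ℕ} (hd : 1 ≤ d) (La : Ed d → Ed d → ℝ) (hLa : TonelliAut La)
    (u : Ed d → ℝ) (hu : Continuous u) (huper : IsZdPeriodic u) :
    ContinuousOn (fun p : ℝ × Ed d => LOnew La u p.1 p.2) {p : ℝ × Ed d | 0 ≤ p.1} := by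
  obtain ⟨m, M, hmM⟩ := periodic_bounded u hu huper
  have hm : ∀ z, m ≤ u z := fun z => (hmM z).1
  obtain ⟨B, hB0, hB⟩ := hLa.lower0
  obtain ⟨C₁, hC₁0, hC₁⟩ := hLa.upper 1
  have hLaC := hLa.continuous
  have hTne : ∀ t : ℝ, 0 ≤ t → ∀ x : Ed d,
      (LOa La u t x) ∈ {r | ∃ σ : ℝ, t ≤ σ ∧ σ ≤ 2*t ∧ r = LOa La u σ x} :=
    fun t ht x => ⟨t, le_rfl, by linarith, rfl⟩
  have hTlow : ∀ t : ℝ, 0 ≤ t → ∀ x : Ed d,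
      ∀ r ∈ {r | ∃ σ : ℝ, t ≤ σ ∧ σ ≤ 2*t ∧ r = LOa La u σ x}, m - B*(2*t) ≤ r := by
    rintro t ht x r ⟨σ, h1, h2, rfl⟩
    have hσ0 : 0 ≤ σ := le_trans ht h1
    have hlow := LOa_lower (u := u) hLaC hB hm hB0 hσ0 x
    have hBσ : B*σ ≤ B*(2*t) := mul_le_mul_of_nonneg_left h2 hB0
    linarith
  have hTbdd : ∀ t : ℝ, 0 ≤ t → ∀ x,
      BddBelow {r | ∃ σ : ℝ, t ≤ σ ∧ σ ≤ 2*t ∧ r = LOa La u σ x} :=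
    fun t ht x => ⟨m - B*(2*t), hTlow t ht x⟩
  have hGub : ∀ t : ℝ, 0 ≤ t → ∀ x, LOnew La u t x ≤ u x + t * C₁ := by
    intro t ht x
    rw [LOnew]
    exact le_trans (csInf_le (hTbdd t ht x) (hTne t ht x)) (LOa_upper hLaC hC₁ hB hm ht x)
  intro p hp
  obtain ⟨t₀, x₀⟩ := p
  have hp0 : 0 ≤ t₀ := hp
  rw [Metric.continuousWithinAt_iff]
  intro ε hε
  rcases eq_or_lt_of_le hp0 with h0 | hpos
  · -- t₀ = 0
    subst h0
    obtain ⟨D, hD0, hlb⟩ := LOa_lb hLa hu huper (ε/4) (by linarith)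
    have hGlb : ∀ t : ℝ, 0 ≤ t → ∀ x, u x - ε/4 - D*(2*t) ≤ LOnew La u t x := by
      intro t ht x
      rw [LOnew]
      refine le_csInf ⟨_, hTne t ht x⟩ ?_
      rintro r ⟨σ, h1, h2, rfl⟩
      have hσ0 : 0 ≤ σ := le_trans ht h1
      have hlow := hlb σ hσ0 x
      have hDσ : D*σ ≤ D*(2*t) := mul_le_mul_of_nonneg_left h2 hD0
      linarith
    obtain ⟨δu, hδu0, hδu⟩ := periodic_unifCont u hu huper (ε/4) (by linarith)
    obtain ⟨δ, hδdef⟩ : ∃ δ : ℝ, δ = min (min (ε/(4*(C₁+1))) (ε/(8*(D+1)))) δu := ⟨_, rfl⟩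
    have hδ0 : 0 < δ := by rw [hδdef]; exact lt_min (lt_min (by positivity) (by positivity)) hδu0
    have hδ1 : δ ≤ ε/(4*(C₁+1)) := by rw [hδdef]; exact le_trans (min_le_left _ _) (min_le_left _ _)
    have hδ2 : δ ≤ ε/(8*(D+1)) := by rw [hδdef]; exact le_trans (min_le_left _ _) (min_le_right _ _)
    have hδ3 : δ ≤ δu := by rw [hδdef]; exact min_le_right _ _
    refine ⟨δ, hδ0, ?_⟩
    rintro ⟨t, x⟩ hq hdist
    have ht0 : 0 ≤ t := hq
    rw [Prod.dist_eq, max_lt_iff] at hdist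
    obtain ⟨hdt, hdx⟩ := hdist
    rw [Real.dist_eq] at hdt
    rw [dist_eq_norm] at hdx
    have htδ : t < δ := by
      have := abs_lt.mp hdt
      simpa using this.2
    -- bounds
    have hub := hGub t ht0 x
    have hlb2 := hGlb t ht0 x
    have hux : |u x - u x₀| ≤ ε/4 := hδu x x₀ (le_of_lt (lt_of_lt_of_le hdx hδ3))
    have hC₁t : t * C₁ ≤ ε/4 := by
      have hQ : (C₁+1) * (ε/(4*(C₁+1))) = ε/4 := by
        field_simp
      have h6 : (C₁+1)*δ ≤ ε/4 := by
        rw [← hQ]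
        exact mul_le_mul_of_nonneg_left hδ1 (by linarith)
      nlinarith
    have hDt : D*(2*t) ≤ ε/4 := by
      have hQ : (D+1) * (ε/(8*(D+1))) = ε/8 := by
        field_simp
      have h6 : (D+1)*δ ≤ ε/8 := by
        rw [← hQ]
        exact mul_le_mul_of_nonneg_left hδ2 (by linarith)
      nlinarith
    have hz : LOnew La u 0 x₀ = u x₀ := LOnew_zero x₀
    show dist (LOnew La u t x) (LOnew La u 0 x₀) < ε
    rw [hz, Real.dist_eq, abs_lt]
    have habs := abs_le.mp hux
    constructor <;> linarith [habs.1, habs.2]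
  · -- t₀ > 0
    obtain ⟨δme, hδme0, hme⟩ := LOa_close hLa hu huper t₀ hpos (ε/2) (by linarith)
    obtain ⟨δ, hδdef⟩ : ∃ δ : ℝ, δ = min (t₀/4) (δme/3) := ⟨_, rfl⟩
    have hδ0 : 0 < δ := by rw [hδdef]; exact lt_min (by linarith) (by linarith)
    have hδa : δ ≤ t₀/4 := by rw [hδdef]; exact min_le_left _ _
    have hδb : δ ≤ δme/3 := by rw [hδdef]; exact min_le_right _ _
    have main : ∀ (a₁ a₂ : ℝ) (y₁ y₂ : Ed d), 0 < a₁ → 0 < a₂ →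
        t₀ - δ ≤ a₁ → a₁ ≤ t₀ + δ → t₀ - δ ≤ a₂ → a₂ ≤ t₀ + δ →
        |a₁ - a₂| ≤ δ → ‖y₁ - y₂‖ ≤ δ →
        LOnew La u a₂ y₂ ≤ LOnew La u a₁ y₁ + ε/2 := by
      intro a₁ a₂ y₁ y₂ ha₁ ha₂ h₁l h₁u h₂l h₂u hab hyy
      have habδ := abs_le.mp hab
      rw [LOnew, LOnew]
      rw [← sub_le_iff_le_add]
      refine le_csInf ⟨_, hTne a₁ ha₁.le y₁⟩ ?_
      rintro r ⟨σ₁, hσ₁1, hσ₁2, rfl⟩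
      have hσ₂mem1 : a₂ ≤ min (max σ₁ a₂) (2*a₂) :=
        le_min (le_max_right _ _) (by linarith)
      have hσ₂mem2 : min (max σ₁ a₂) (2*a₂) ≤ 2*a₂ := min_le_right _ _
      have hσ₂close : |min (max σ₁ a₂) (2*a₂) - σ₁| ≤ 3*δ := by
        rw [abs_le]
        rcases le_total a₂ σ₁ with h | h <;> rcases le_total (max σ₁ a₂) (2*a₂) with h2 | h2
        · rw [max_eq_left h] at h2 ⊢
          rw [min_eq_left h2]
          constructor <;> linarith
        · rw [max_eq_left h] at h2 ⊢
          rw [min_eq_right h2]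
          constructor <;> linarith
        · rw [max_eq_right h] at h2 ⊢
          rw [min_eq_left h2]
          constructor <;> linarith
        · rw [max_eq_right h] at h2 ⊢
          rw [min_eq_right h2]
          constructor <;> linarith
      have hrange1 : t₀/2 ≤ σ₁ := by linarith
      have hrange2 : σ₁ ≤ 4*t₀ := by linarith
      have hrange3 : t₀/2 ≤ min (max σ₁ a₂) (2*a₂) := by linarith
      have hrange4 : min (max σ₁ a₂) (2*a₂) ≤ 4*t₀ := by linarith
      have hclose : |σ₁ - min (max σ₁ a₂) (2*a₂)| ≤ δme := by
        rw [abs_sub_comm]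
        linarith
      have hyy' : ‖y₁ - y₂‖ ≤ δme := by linarith
      have hLOa := hme σ₁ (min (max σ₁ a₂) (2*a₂)) y₁ y₂ hrange1 hrange2 hrange3 hrange4
        hclose hyy'
      have hmem : LOa La u (min (max σ₁ a₂) (2*a₂)) y₂
          ∈ {r | ∃ σ : ℝ, a₂ ≤ σ ∧ σ ≤ 2*a₂ ∧ r = LOa La u σ y₂} :=
        ⟨_, hσ₂mem1, hσ₂mem2, rfl⟩
      have hle := csInf_le (hTbdd a₂ ha₂.le y₂) hmem
      linarith
    refine ⟨δ, hδ0, ?_⟩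
    rintro ⟨t, x⟩ hq hdist
    have ht0 : 0 ≤ t := hq
    rw [Prod.dist_eq, max_lt_iff] at hdist
    obtain ⟨hdt, hdx⟩ := hdist
    rw [Real.dist_eq] at hdt
    rw [dist_eq_norm] at hdx
    have habs := abs_lt.mp hdt
    have htpos : 0 < t := by linarith
    have h1 := main t₀ t x₀ x hpos htpos (by linarith) (by linarith) (by linarith) (by linarith)
      (by rw [abs_le]; constructor <;> linarith) (by rw [norm_sub_rev]; linarith)
    have h2 := main t t₀ x x₀ htpos hpos (by linarith) (by linarith) (by linarith) (by linarith)
      (by rw [abs_le]; constructor <;> linarith) (by linarith)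
    show dist (LOnew La u t x) (LOnew La u t₀ x₀) < ε
    rw [Real.dist_eq, abs_lt]
    constructor <;> linarith
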